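/- Let W be an n×n real matrix and λ > 0 with ‖W‖_F < 4/λ. Then the sigmoid FCM update map G(A)_i = 1/(1 + exp(-λ ∑_j w_{ij} A_j)) has a unique fixed point in ℝⁿ, and for any initial vector A⁰ the iterates A^{t+1} = G(A^t) converge to this fixed point. -/

import Mathlib

open Real Filter

noncomputable def sigm (x : ℝ) : ℝ := 1 / (1 + Real.exp (-x))

lemma sigm_hasDerivAt (x : ℝ) :
    HasDerivAt sigm (Real.exp (-x) / (1 + Real.exp (-x)) ^ 2) x := by
  have h1 : HasDerivAt (fun x : ℝ => 1 + Real.exp (-x)) (-Real.exp (-x)) x := by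
    have := (Real.hasDerivAt_exp (-x)).comp x (hasDerivAt_neg x)
    simpa using this.const_add 1
  have hne : (1 : ℝ) + Real.exp (-x) ≠ 0 := by positivity
  have := h1.inv hne
  have e : sigm = (fun x => 1 + Real.exp (-x))⁻¹ := by funext y; simp [sigm, one_div]
  rw [e]; exact this.congr_deriv (by ring)

lemma sigm_lipschitz : LipschitzWith (1/4 : NNReal) sigm := by
  apply lipschitzWith_of_nnnorm_deriv_le
  · intro x; exact (sigm_hasDerivAt x).differentiableAt
  · intro x
    rw [(sigm_hasDerivAt x).deriv, ← NNReal.coe_le_coe, coe_nnnorm]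
    push_cast
    rw [Real.norm_eq_abs]
    have he : 0 < Real.exp (-x) := Real.exp_pos _
    rw [abs_of_nonneg (by positivity)]
    rw [div_le_iff₀ (by positivity)]
    nlinarith [sq_nonneg (1 - Real.exp (-x))]

lemma sigm_dist (a b : ℝ) : |sigm a - sigm b| ≤ (1/4) * |a - b| := by
  have := sigm_lipschitz.dist_le_mul a b
  simpa [Real.dist_eq] using this

theorem sigmoid_fcm_unique_fixed_point (n : ℕ) (l : ℝ) (hl : 0 < l)
    (W : Matrix (Fin n) (Fin n) ℝ)
    (hW : Real.sqrt (∑ i, ∑ j, (W i j) ^ 2) < 4 / l)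
    (G : (Fin n → ℝ) → (Fin n → ℝ))
    (hG : ∀ A i, G A i = 1 / (1 + Real.exp (-l * ∑ j, W i j * A j))) :
    ∃ Astar : Fin n → ℝ, G Astar = Astar ∧
      (∀ B : Fin n → ℝ, G B = B → B = Astar) ∧
      ∀ A0 : Fin n → ℝ,
        Filter.Tendsto (fun t => G^[t] A0) Filter.atTop (nhds Astar) := by
  set c : ℝ := Real.sqrt (∑ i, ∑ j, (W i j) ^ 2) with hc
  have hc0 : 0 ≤ c := Real.sqrt_nonneg _
  have hc2 : c ^ 2 = ∑ i, ∑ j, (W i j) ^ 2 := Real.sq_sqrt (by positivity)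
  set F : EuclideanSpace ℝ (Fin n) → EuclideanSpace ℝ (Fin n) := fun A => WithLp.toLp 2 (fun i => sigm (l * ∑ j, W i j * A j)) with hF
  have hFG : ∀ A : Fin n → ℝ, (F (WithLp.toLp 2 A)).ofLp = G A := by
    intro A; funext i
    rw [hG]
    show sigm (l * ∑ j, W i j * A j) = _
    simp [sigm, neg_mul]
  set K : NNReal := Real.toNNReal (l * c / 4) with hK
  have hKc : (K : ℝ) = l * c / 4 := Real.coe_toNNReal _ (by positivity)
  have hK1 : (K : ℝ) < 1 := by
    rw [hKc]
    rw [lt_div_iff₀ hl] at hW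
    rw [div_lt_one (by norm_num)]
    nlinarith
  have hLip : LipschitzWith K F := by
    apply LipschitzWith.of_dist_le_mul
    intro A B
    rw [EuclideanSpace.dist_eq, EuclideanSpace.dist_eq]
    simp only [Real.dist_eq, sq_abs]
    have hD0 : (0:ℝ) ≤ Real.sqrt (∑ i, (A i - B i) ^ 2) := Real.sqrt_nonneg _
    set D : ℝ := Real.sqrt (∑ i, (A i - B i) ^ 2) with hD
    have hD2 : D ^ 2 = ∑ i, (A i - B i) ^ 2 := Real.sq_sqrt (by positivity)
    have key : ∀ i, |F A i - F B i| ≤ l / 4 * (Real.sqrt (∑ j, W i j ^ 2) * D) := by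
      intro i
      have h1 : |F A i - F B i| ≤ 1 / 4 * |l * ∑ j, W i j * A j - l * ∑ j, W i j * B j| :=
        sigm_dist _ _
      have h2 : l * ∑ j, W i j * A j - l * ∑ j, W i j * B j
          = l * ∑ j, W i j * (A j - B j) := by
        rw [Finset.mul_sum, Finset.mul_sum, ← Finset.sum_sub_distrib, Finset.mul_sum]
        congr 1; funext j; ring
      have h3 : |∑ j, W i j * (A j - B j)| ≤ Real.sqrt (∑ j, W i j ^ 2) * D := by
        calc |∑ j, W i j * (A j - B j)| ≤ ∑ j, |W i j * (A j - B j)| :=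
              Finset.abs_sum_le_sum_abs _ _
          _ = ∑ j, |W i j| * |A j - B j| := by simp [abs_mul]
          _ ≤ Real.sqrt (∑ j, |W i j| ^ 2) * Real.sqrt (∑ j, |A j - B j| ^ 2) :=
              Real.sum_mul_le_sqrt_mul_sqrt _ _ _
          _ = Real.sqrt (∑ j, W i j ^ 2) * D := by rw [hD]; simp [sq_abs]
      calc |F A i - F B i| ≤ 1 / 4 * |l * ∑ j, W i j * (A j - B j)| := by rw [← h2]; exact h1
        _ = l / 4 * |∑ j, W i j * (A j - B j)| := by
            rw [abs_mul, abs_of_pos hl]; ring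
        _ ≤ l / 4 * (Real.sqrt (∑ j, W i j ^ 2) * D) :=
            mul_le_mul_of_nonneg_left h3 (by positivity)
    have sq_sum : ∑ i, (F A i - F B i) ^ 2 ≤ (l / 4 * c * D) ^ 2 := by
      have step : ∑ i, (F A i - F B i) ^ 2 ≤ ∑ i, (l / 4) ^ 2 * ((∑ j, W i j ^ 2) * D ^ 2) := by
        apply Finset.sum_le_sum
        intro i _
        calc (F A i - F B i) ^ 2 ≤ (l / 4 * (Real.sqrt (∑ j, W i j ^ 2) * D)) ^ 2 := by
              rw [← sq_abs (F A i - F B i)]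
              exact pow_le_pow_left₀ (abs_nonneg _) (key i) 2
          _ = (l / 4) ^ 2 * ((Real.sqrt (∑ j, W i j ^ 2)) ^ 2 * D ^ 2) := by ring
          _ = (l / 4) ^ 2 * ((∑ j, W i j ^ 2) * D ^ 2) := by
              rw [Real.sq_sqrt (by positivity : (0:ℝ) ≤ ∑ j, W i j ^ 2)]
      calc ∑ i, (F A i - F B i) ^ 2 ≤ ∑ i, (l / 4) ^ 2 * ((∑ j, W i j ^ 2) * D ^ 2) := step
        _ = (l / 4) ^ 2 * ((∑ i, ∑ j, W i j ^ 2) * D ^ 2) := by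
            rw [← Finset.mul_sum, ← Finset.sum_mul]
        _ = (l / 4 * c * D) ^ 2 := by rw [← hc2]; ring
    calc Real.sqrt (∑ i, (F A i - F B i) ^ 2) ≤ Real.sqrt ((l / 4 * c * D) ^ 2) :=
          Real.sqrt_le_sqrt sq_sum
      _ = l / 4 * c * D := Real.sqrt_sq (by positivity)
      _ = K * D := by rw [hKc]; ring
  have hContr : ContractingWith K F := ⟨by exact_mod_cast hK1, hLip⟩
  have hne : Nonempty (EuclideanSpace ℝ (Fin n)) := ⟨0⟩
  set Astar : EuclideanSpace ℝ (Fin n) := hContr.fixedPoint F with hAstar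
  have hfix : Function.IsFixedPt F Astar := hContr.fixedPoint_isFixedPt
  refine ⟨Astar.ofLp, ?_, ?_, ?_⟩
  · rw [← hFG]; exact congrArg WithLp.ofLp hfix
  · intro B hB
    have hu := hContr.fixedPoint_unique (x := WithLp.toLp 2 B)
      (by show F _ = _; apply WithLp.ofLp_injective; rw [hFG]; exact hB)
    exact congrArg WithLp.ofLp hu
  · intro A0
    have hT : Tendsto (fun t => F^[t] (WithLp.toLp 2 A0)) atTop (nhds Astar) :=
      hContr.tendsto_iterate_fixedPoint (WithLp.toLp 2 A0)
    have hit : ∀ t, G^[t] A0 = (F^[t] (WithLp.toLp 2 A0)).ofLp := by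
      intro t
      induction t with
      | zero => rfl
      | succ t ih =>
        rw [Function.iterate_succ_apply', Function.iterate_succ_apply', ih, ← hFG]
    simp only [hit]
    exact ((PiLp.continuous_ofLp (p := 2) (β := fun _ : Fin n => ℝ)).tendsto _).comp hT
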